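/- Let 𝔟 be a sesquilinear form on a Hilbert space K with domain D(𝔟) = T(V_H), defined by 𝔟(Tu, Tv) = 𝔞(u,v) for u, v ∈ V_H, where T : V_H → K is bounded linear and injective and 𝔞 is a bounded sesquilinear form on the Hilbert space V ⊇ V_H. Assume there exist constants w, δ > 0 with Re 𝔟(φ,φ) + w ‖φ‖_K² ≥ δ ‖u‖_V² whenever φ = Tu, u ∈ V_H, and V_H is closed in V. Then 𝔟 is a closed form: D(𝔟) is complete for the norm φ ↦ (Re 𝔟(φ,φ) + w ‖φ‖_K²)^{1/2}. -/
import Mathlib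


/- STATEMENT 4: Let `𝔟` be the sesquilinear form with domain `D(𝔟) = T(V_H)` defined by
`𝔟(Tu, Tv) = 𝔞(u,v)` for `u, v ∈ V_H`, where `T` is bounded linear and injective on the
closed subspace `V_H` of `V` and `𝔞` is a bounded sesquilinear form on `V`. If
`Re 𝔟(φ,φ) + w ‖φ‖² ≥ δ ‖u‖_V²` for `φ = Tu`, `u ∈ V_H`, then `𝔟` is closed: `D(𝔟)` is
complete for the form norm `φ ↦ (Re 𝔟(φ,φ) + w ‖φ‖²)^{1/2}`. Completeness is expressed
through representatives: every sequence `(T u_n)`, `u_n ∈ V_H`, which is Cauchy for the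
form norm converges in the form norm to some element `T v` of `D(𝔟)`.
(Note `Re 𝔟(T u, T u') = Re 𝔞(u, u')` by the definition of `𝔟`.) -/

open Filter

theorem form_b_is_closed
    {V K : Type*} [NormedAddCommGroup V] [InnerProductSpace ℂ V] [CompleteSpace V]
    [NormedAddCommGroup K] [InnerProductSpace ℂ K] [CompleteSpace K]
    (VH : Submodule ℂ V) (hVH : IsClosed (VH : Set V))
    (T : V →L[ℂ] K) (hTinj : Set.InjOn T (VH : Set V))
    (a : V → V → ℂ)
    -- `a` is sesquilinear:
    (ha1 : ∀ v, IsLinearMap ℂ fun u => a u v)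
    (ha2 : ∀ u v w : V, a u (v + w) = a u v + a u w)
    (ha3 : ∀ (c : ℂ) (u v : V), a u (c • v) = starRingEnd ℂ c * a u v)
    -- `a` is bounded:
    (C : ℝ) (hbound : ∀ u v, ‖a u v‖ ≤ C * ‖u‖ * ‖v‖)
    -- the coercivity-type estimate `Re 𝔟(φ,φ) + w ‖φ‖² ≥ δ ‖u‖_V²` for `φ = T u`:
    (w δ : ℝ) (hw : 0 < w) (hδ : 0 < δ)
    (hcoer : ∀ u ∈ VH, δ * ‖u‖ ^ 2 ≤ (a u u).re + w * ‖T u‖ ^ 2) :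
    -- closedness of `𝔟`:
    ∀ u : ℕ → V, (∀ n, u n ∈ VH) →
      (∀ ε > (0 : ℝ), ∃ N, ∀ m ≥ N, ∀ n ≥ N,
        (a (u n - u m) (u n - u m)).re + w * ‖T (u n) - T (u m)‖ ^ 2 < ε) →
      ∃ v ∈ VH, Tendsto
        (fun n => (a (u n - v) (u n - v)).re + w * ‖T (u n) - T v‖ ^ 2)
        atTop (nhds 0) := by
  intro u hu hC
  -- u is Cauchy in V
  have hcauchy : CauchySeq u := by
    rw [Metric.cauchySeq_iff]
    intro ε hε
    obtain ⟨N, hN⟩ := hC (δ * ε ^ 2) (by positivity)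
    refine ⟨N, fun m hm n hn => ?_⟩
    have hmem : u m - u n ∈ VH := VH.sub_mem (hu m) (hu n)
    have h1 := hcoer _ hmem
    have h2 := hN n hn m hm
    rw [← map_sub] at h2
    have : δ * ‖u m - u n‖ ^ 2 < δ * ε ^ 2 := lt_of_le_of_lt h1 h2
    have hlt : ‖u m - u n‖ ^ 2 < ε ^ 2 := by
      have := (mul_lt_mul_iff_right₀ hδ).mp this
      exact this
    rw [dist_eq_norm]
    nlinarith [norm_nonneg (u m - u n)]
  obtain ⟨v, hv⟩ := cauchySeq_tendsto_of_complete hcauchy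
  have hvVH : v ∈ VH := hVH.mem_of_tendsto hv (Eventually.of_forall hu)
  refine ⟨v, hvVH, ?_⟩
  have hnorm : Tendsto (fun n => ‖u n - v‖) atTop (nhds 0) := by
    rw [← tendsto_iff_norm_sub_tendsto_zero] ; exact hv
  have hsq : Tendsto (fun n => (C + w * ‖T‖ ^ 2) * ‖u n - v‖ ^ 2) atTop (nhds 0) := by
    have : Tendsto (fun n => ‖u n - v‖ ^ 2) atTop (nhds 0) := by
      have := hnorm.pow 2
      simpa using this
    simpa using this.const_mul (C + w * ‖T‖ ^ 2)
  refine squeeze_zero (fun n => ?_) (fun n => ?_) hsq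
  · have hmem : u n - v ∈ VH := VH.sub_mem (hu n) hvVH
    have h1 := hcoer _ hmem
    have h0 : (0:ℝ) ≤ δ * ‖u n - v‖ ^ 2 := by positivity
    rw [← map_sub]
    linarith
  · have h1 : (a (u n - v) (u n - v)).re ≤ C * ‖u n - v‖ ^ 2 := by
      calc (a (u n - v) (u n - v)).re ≤ ‖a (u n - v) (u n - v)‖ := Complex.re_le_norm _
        _ ≤ C * ‖u n - v‖ * ‖u n - v‖ := hbound _ _
        _ = C * ‖u n - v‖ ^ 2 := by ring
    have h2 : w * ‖T (u n) - T v‖ ^ 2 ≤ w * ‖T‖ ^ 2 * ‖u n - v‖ ^ 2 := by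
      rw [← map_sub]
      have := T.le_opNorm (u n - v)
      have hn0 : (0:ℝ) ≤ ‖T (u n - v)‖ := norm_nonneg _
      have hsq : ‖T (u n - v)‖ ^ 2 ≤ (‖T‖ * ‖u n - v‖) ^ 2 := by
        have := mul_le_mul this this hn0 (by positivity)
        nlinarith
      nlinarith [hw.le]
    linarith
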